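/- The braiding is equivariant: for representations (U,ρ_U) and (V,ρ_V) of g with tensor product structure ρ_{U,V} := ρ_U ⊙ 𝟙_V + 𝟙_U ⊙ ρ_V, the braiding intertwiner γ_{U,V} = {s_{U,V}} satisfies [ρ, γ_{U,V}] = 0, i.e. γ_{U,V} ρ_{U,V} = ρ_{V,U} γ_{U,V} (using ϱ_{γ_{U,V}} = 0). -/

import Mathlib

noncomputable section

namespace LMI

/-- A graded vector space, modelled by a homogeneous basis with degree function. -/
structure GVS where
  B : Type
  deg : B → ℤ

/-- Tensor product of graded vector spaces (product of bases, sum of degrees). -/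
def GVS.tens (U V : GVS) : GVS := ⟨U.B × V.B, fun p => U.deg p.1 + V.deg p.2⟩

variable (K : Type) [Field K]

/-- The sign (-1)^z. -/
def ksign (z : ℤ) : K := (-1 : K) ^ z.natAbs

/-- The Koszul sign of a permutation acting on homogeneous elements of degrees `d`. -/
def kperm {n : ℕ} (d : Fin n → ℤ) (σ : Equiv.Perm (Fin n)) : K :=
  ∏ p ∈ Finset.univ.filter (fun p : Fin n × Fin n => p.1 < p.2 ∧ σ p.2 < σ p.1),
    ksign K (d p.1 * d p.2)

/-- The signature of a permutation, as an element of K. -/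
def psign {n : ℕ} (σ : Equiv.Perm (Fin n)) : K := ((Equiv.Perm.sign σ : ℤ) : K)

/-- `(a, n-a)`-shuffles: permutations increasing on the first `a` and the last `n-a` positions. -/
def IsShuffle {n : ℕ} (a : ℕ) (σ : Equiv.Perm (Fin n)) : Prop :=
  ∀ k l : Fin n, k < l → ((l : ℕ) < a ∨ a ≤ (k : ℕ)) → σ k < σ l

instance {n a : ℕ} : DecidablePred (IsShuffle (n := n) a) := fun σ => by
  unfold IsShuffle; infer_instance

def shuffles (n a : ℕ) : Finset (Equiv.Perm (Fin n)) :=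
  Finset.univ.filter (IsShuffle a)

/-- Total degree of a family of basis elements. -/
def dsum (g : GVS) {m : ℕ} (ξ : Fin m → g.B) : ℤ := ∑ k, g.deg (ξ k)

def firstPart {β : Type} {n : ℕ} (a : Fin (n + 1)) (ξ : Fin n → β) : Fin (a : ℕ) → β :=
  fun t => ξ ⟨t, by have h1 := t.isLt; have h2 := a.isLt; omega⟩

def lastPart {β : Type} {n : ℕ} (a : Fin (n + 1)) (ξ : Fin n → β) : Fin (n - (a : ℕ)) → β :=
  fun t => ξ ⟨(a : ℕ) + t, by have h1 := t.isLt; have h2 := a.isLt; omega⟩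

/-- A "pre-intertwiner" `U ⇝ V`: a family of maps `g^{⊗n} ⊗ U → V`, given on bases. -/
abbrev Pre (g U V : GVS) : Type := (i : ℕ) → (Fin i → g.B) → U.B → (V.B →₀ K)

/-- A family of structure maps `ℓ^i : g^{⊗i} → g`, given on bases. -/
abbrev LFam (g : GVS) : Type := (i : ℕ) → (Fin i → g.B) → (g.B →₀ K)

/-- Tensor product of two vectors, in basis coordinates. -/
def tensF {U V : GVS} (x : U.B →₀ K) (y : V.B →₀ K) : (U.tens V).B →₀ K :=
  x.sum fun b c => y.sum fun b' c' => Finsupp.single (b, b') (c * c')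

/-- Linear extension of a map defined on a basis. -/
def lf {α β : Type} (φ : α → (β →₀ K)) (x : α →₀ K) : β →₀ K :=
  x.sum fun a c => c • φ a

/-- Juxtaposition (composition) of intertwiners:
`(G F)^i := Σ_{j̃+k=i} (-1)^{(|G|-j̃)k̃} G^j (1_{j̃} ⊗ F^k)(Σ_{j̃,k̃} ⊗ 1_U)`. -/
def juxt {g U V W : GVS} (nG nF : ℤ) (G : Pre K g V W) (F : Pre K g U V) : Pre K g U W :=
  fun n ξ u =>
    ∑ a : Fin (n + 1), ∑ σ ∈ shuffles n (a : ℕ),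
      (psign K σ * kperm K (g.deg ∘ ξ) σ
        * ksign K ((nF - ((n : ℤ) - ((a : ℕ) : ℤ))) * dsum g (firstPart a (ξ ∘ σ)))
        * ksign K ((nG - ((a : ℕ) : ℤ)) * ((n : ℤ) - ((a : ℕ) : ℤ))))
      • lf K (G (a : ℕ) (firstPart a (ξ ∘ σ))) (F (n - (a : ℕ)) (lastPart a (ξ ∘ σ)) u)

/-- The odot (monoidal) product of intertwiners:
`(F ⊙ G)^i := Σ (-1)^{(|F|-j̃)k̃}(F^j ⊗ G^k)(1_{j̃} ⊗ s_{k̃,U} ⊗ 1_V)(Σ_{j̃,k̃} ⊗ 1_{U⊗V})`. -/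
def odot {g U U' V V' : GVS} (nF nG : ℤ) (F : Pre K g U U') (G : Pre K g V V') :
    Pre K g (U.tens V) (U'.tens V') :=
  fun n ξ p =>
    ∑ a : Fin (n + 1), ∑ σ ∈ shuffles n (a : ℕ),
      (psign K σ * kperm K (g.deg ∘ ξ) σ
        * ksign K (U.deg p.1 * dsum g (lastPart a (ξ ∘ σ)))
        * ksign K ((nG - ((n : ℤ) - ((a : ℕ) : ℤ))) * (dsum g (firstPart a (ξ ∘ σ)) + U.deg p.1))
        * ksign K ((nF - ((a : ℕ) : ℤ)) * ((n : ℤ) - ((a : ℕ) : ℤ))))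
      • tensF K (F (a : ℕ) (firstPart a (ξ ∘ σ)) p.1) (G (n - (a : ℕ)) (lastPart a (ξ ∘ σ)) p.2)

/-- The identity intertwiner `𝟙_U`. -/
def oneI {g : GVS} (U : GVS) : Pre K g U U :=
  fun n _ u => if n = 0 then Finsupp.single u 1 else 0

/-- The homotopy components `ϱ_F^i := (-1)^i F^{i+1} : g^{⊗i} ⊗ U → V[|F|-i]`. -/
def varr {g U V : GVS} (F : Pre K g U V) : Pre K g (g.tens U) V :=
  fun n ξ p => ksign K ((n : ℤ) + 1) • F (n + 1) (Fin.snoc ξ p.1) p.2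

/-- The intertwiner `ℓ_U : U ⇝ (g ⊗ U)[2]` with components `ℓ^{ĩ} ⊗ 1_U`. -/
def ellU {g : GVS} (L : LFam K g) (U : GVS) : Pre K g U (g.tens U) :=
  fun n ξ u => (L n ξ).sum fun y c => Finsupp.single (y, u) c

/-- The braiding intertwiner `γ_{U,V}` with sole component the Koszul swap. -/
def gammaI {g : GVS} (U V : GVS) : Pre K g (U.tens V) (V.tens U) :=
  fun n _ p => if n = 0 then ksign K (U.deg p.1 * V.deg p.2) • Finsupp.single (p.2, p.1) 1 else 0

/-- The adjoint representation `ρ_g^i = (-1)^{ĩ} ℓ^i`. -/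
def adj {g : GVS} (L : LFam K g) : Pre K g g g :=
  fun n ξ x => ksign K (n : ℤ) • L (n + 1) (Fin.snoc ξ x)

/-- The action map `ϱ_U : g ⊙ U ⇝ U` with components `ϱ_U^i = (-1)^{ĩ} ρ_U^{i+1}`. -/
def actU {g U : GVS} (ρU : Pre K g U U) : Pre K g (g.tens U) U := - varr K ρU

/-- The hom-differential `[ρ,F] := ρ_V F - (-1)^{|F|} F ρ_U - ϱ_F ℓ_U`. -/
def brkt {g U V : GVS} (L : LFam K g) (ρU : Pre K g U U) (ρV : Pre K g V V)
    (nf : ℤ) (F : Pre K g U V) : Pre K g U V :=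
  juxt K 1 nf ρV F - ksign K nf • juxt K nf 1 F ρU
    - juxt K (nf - 1) 2 (varr K F) (ellU K L U)

/-- The tensor product structure map `ρ_{U,V} := ρ_U ⊙ 𝟙_V + 𝟙_U ⊙ ρ_V`. -/
def rhoT {g U V : GVS} (ρU : Pre K g U U) (ρV : Pre K g V V) :
    Pre K g (U.tens V) (U.tens V) :=
  odot K 1 0 ρU (oneI K V) + odot K 0 1 (oneI K U) ρV

/-- `F` is an intertwiner `U ⇝ V[nf]`: graded of degree `nf` and fully
(Koszul-)skew-symmetric in the `g`-entries. -/
def IsIntertwiner (g U V : GVS) (nf : ℤ) (F : Pre K g U V) : Prop :=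
  (∀ (n : ℕ) (ξ : Fin n → g.B) (u : U.B), ∀ b ∈ (F n ξ u).support,
      V.deg b = dsum g ξ + U.deg u + nf - n) ∧
  (∀ (n : ℕ) (ξ : Fin n → g.B) (u : U.B) (σ : Equiv.Perm (Fin n)),
      F n (ξ ∘ σ) u = (psign K σ * kperm K (g.deg ∘ ξ) σ) • F n ξ u)

/-- The generalised Jacobi identity `Σ_{j̃+k=i} (-1)^{j̃} ℓ^j(ℓ^k ⊗ 1_{j̃})Σ_{k,j̃} = 0`. -/
def GJacobi (g : GVS) (L : LFam K g) : Prop :=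
  ∀ (n : ℕ) (ξ : Fin n → g.B),
    (∑ a : Fin (n + 1), ∑ σ ∈ shuffles n (a : ℕ),
      (psign K σ * kperm K (g.deg ∘ ξ) σ * ksign K ((n : ℤ) - ((a : ℕ) : ℤ)))
      • ((L (a : ℕ) (firstPart a (ξ ∘ σ))).sum
          fun y c => c • L (n - (a : ℕ) + 1) (Fin.cons y (lastPart a (ξ ∘ σ))))) = 0

/-- `(g, L)` is a homotopy Lie algebra: brackets `ℓ^i : Λ^i g → g[2-i]` (`i ≥ 1`)
satisfying the generalised Jacobi identity. -/
def IsHLA (g : GVS) (L : LFam K g) : Prop :=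
  (L 0 = fun _ => 0) ∧
  (∀ (i : ℕ) (ξ : Fin i → g.B), ∀ b ∈ (L i ξ).support, g.deg b = dsum g ξ + 2 - i) ∧
  (∀ (i : ℕ) (ξ : Fin i → g.B) (σ : Equiv.Perm (Fin i)),
      L i (ξ ∘ σ) = (psign K σ * kperm K (g.deg ∘ ξ) σ) • L i ξ) ∧
  GJacobi K g L

/-- `(U, ρU)` is a representation of `(g, L)`: a degree 1 intertwiner
with `ρ_U ρ_U = ϱ_{ρ_U} ℓ_U`. -/
def IsRep (g : GVS) (L : LFam K g) (U : GVS) (ρU : Pre K g U U) : Prop :=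
  IsIntertwiner K g U U 1 ρU ∧
  juxt K 1 1 ρU ρU = juxt K 0 2 (varr K ρU) (ellU K L U)

/-- Transport an intertwiner along an identification of domain bases. -/
def transp {g U U' V : GVS} (e : U.B ≃ U'.B) (F : Pre K g U' V) : Pre K g U V :=
  fun n ξ u => F n ξ (e u)

/-- Transport an intertwiner along an identification of codomain bases. -/
def transpC {g U V V' : GVS} (e : V.B ≃ V'.B) (F : Pre K g U V) : Pre K g U V' :=
  fun n ξ u => Finsupp.equivMapDomain e (F n ξ u)



/-! ### Auxiliary lemmas for the equivariance of the braiding -/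

section GammaEquivariantAux

lemma ksign_zero : ksign K 0 = 1 := by simp [ksign]

lemma ksign_eq_ite (z : ℤ) : ksign K z = if Even z then 1 else -1 := by
  unfold ksign
  rcases Int.even_or_odd z with h | h
  · rw [if_pos h, (h.natAbs).neg_one_pow]
  · rw [if_neg (by rwa [Int.not_even_iff_odd]), (h.natAbs).neg_one_pow]

lemma ksign_congr {x y : ℤ} (h : Even (x - y)) : ksign K x = ksign K y := by
  rw [Int.even_sub] at h
  by_cases hx : Even x
  · rw [ksign_eq_ite, ksign_eq_ite, if_pos hx, if_pos (h.mp hx)]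
  · rw [ksign_eq_ite, ksign_eq_ite, if_neg hx, if_neg (fun hy => hx (h.mpr hy))]

lemma ksign_add (x y : ℤ) : ksign K (x + y) = ksign K x * ksign K y := by
  rcases Int.even_or_odd x with hx | hx <;> rcases Int.even_or_odd y with hy | hy <;>
    rw [ksign_eq_ite, ksign_eq_ite, ksign_eq_ite]
  · rw [if_pos (hx.add hy), if_pos hx, if_pos hy]; ring
  · rw [if_neg (by rw [Int.not_even_iff_odd]; exact hx.add_odd hy), if_pos hx,
      if_neg (by rwa [Int.not_even_iff_odd])]; ring
  · rw [if_neg (by rw [Int.not_even_iff_odd]; exact hx.add_even hy),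
      if_neg (by rwa [Int.not_even_iff_odd]), if_pos hy]; ring
  · rw [if_pos (hx.add_odd hy), if_neg (by rwa [Int.not_even_iff_odd]),
      if_neg (by rwa [Int.not_even_iff_odd])]; ring

lemma psign_one {n : ℕ} : psign K (1 : Equiv.Perm (Fin n)) = 1 := by
  simp [psign]

lemma kperm_one {n : ℕ} (d : Fin n → ℤ) : kperm K d (1 : Equiv.Perm (Fin n)) = 1 := by
  unfold kperm
  rw [Finset.filter_false_of_mem, Finset.prod_empty]
  rintro p - ⟨h1, h2⟩
  simp only [Equiv.Perm.coe_one, id_eq] at h2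
  exact lt_asymm h1 h2

lemma isShuffle_one {n a : ℕ} : IsShuffle a (1 : Equiv.Perm (Fin n)) := by
  intro k l hkl _
  simpa using hkl

lemma shuffles_zero (n : ℕ) : shuffles n 0 = {1} := by
  ext σ
  simp only [shuffles, Finset.mem_filter, Finset.mem_univ, true_and, Finset.mem_singleton]
  constructor
  · intro h
    have hm : StrictMono ⇑σ := fun k l hkl => h k l hkl (Or.inr (Nat.zero_le _))
    letI : WellFoundedLT (Fin n) := inferInstance
    have : ⇑σ = id := (hm.range_inj (strictMono_id (α := Fin n))).mp
      (by rw [Set.range_id, σ.surjective.range_eq])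
    exact Equiv.ext fun x => congrFun this x
  · rintro rfl; exact isShuffle_one

lemma shuffles_full (n : ℕ) : shuffles n n = {1} := by
  ext σ
  simp only [shuffles, Finset.mem_filter, Finset.mem_univ, true_and, Finset.mem_singleton]
  constructor
  · intro h
    have hm : StrictMono ⇑σ := fun k l hkl => h k l hkl (Or.inl l.isLt)
    letI : WellFoundedLT (Fin n) := inferInstance
    have : ⇑σ = id := (hm.range_inj (strictMono_id (α := Fin n))).mp
      (by rw [Set.range_id, σ.surjective.range_eq])
    exact Equiv.ext fun x => congrFun this x
  · rintro rfl; exact isShuffle_one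

lemma dsum_eq_zero {g : GVS} {m : ℕ} (h : m = 0) (ξ : Fin m → g.B) : dsum g ξ = 0 := by
  subst h; simp [dsum]

lemma lf_eq_zero {α β : Type} {φ : α → (β →₀ K)} (h : ∀ u, φ u = 0) (x : α →₀ K) :
    lf K φ x = 0 := by
  simp [lf, h]

lemma lf_zero {α β : Type} (φ : α → (β →₀ K)) : lf K φ (0 : α →₀ K) = 0 := by
  simp [lf]

lemma lf_single {α β : Type} (φ : α → (β →₀ K)) (a : α) (c : K) :
    lf K φ (Finsupp.single a c) = c • φ a := by
  unfold lf
  rw [Finsupp.sum_single_index (zero_smul K (φ a))]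

lemma lf_add {α β : Type} (φ : α → (β →₀ K)) (x y : α →₀ K) :
    lf K φ (x + y) = lf K φ x + lf K φ y := by
  unfold lf
  exact Finsupp.sum_add_index' (fun a => zero_smul K (φ a)) (fun a b₁ b₂ => add_smul b₁ b₂ (φ a))

lemma lf_smul {α β : Type} (φ : α → (β →₀ K)) (c : K) (x : α →₀ K) :
    lf K φ (c • x) = c • lf K φ x := by
  unfold lf
  rw [Finsupp.sum_smul_index (fun a => zero_smul K (φ a)), Finsupp.smul_sum]
  exact Finsupp.sum_congr fun a _ => mul_smul c (x a) (φ a)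

lemma lf_sum {α β γ : Type} (φ : α → (β →₀ K)) (x : γ →₀ K) (f : γ → K → (α →₀ K)) :
    lf K φ (x.sum f) = x.sum fun a c => lf K φ (f a c) := by
  unfold lf
  exact Finsupp.sum_sum_index (fun a => zero_smul K (φ a)) (fun a b₁ b₂ => add_smul b₁ b₂ (φ a))

lemma tensF_zero_left {U V : GVS} (y : V.B →₀ K) :
    tensF K (0 : U.B →₀ K) y = 0 := by
  simp [tensF]

lemma tensF_zero_right {U V : GVS} (x : U.B →₀ K) :
    tensF K x (0 : V.B →₀ K) = 0 := by
  simp [tensF]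

lemma tensF_single_left {U V : GVS} (u : U.B) (y : V.B →₀ K) :
    tensF K (Finsupp.single u (1 : K)) y = y.sum fun b c => Finsupp.single (u, b) c := by
  unfold tensF
  rw [Finsupp.sum_single_index (by simp only [zero_mul]; exact Finset.sum_eq_zero fun _ _ => Finsupp.single_zero _)]
  simp; rfl

lemma tensF_single_right {U V : GVS} (x : U.B →₀ K) (v : V.B) :
    tensF K x (Finsupp.single v (1 : K)) = x.sum fun b c => Finsupp.single (b, v) c := by
  unfold tensF
  refine Finsupp.sum_congr fun b _ => ?_
  rw [Finsupp.sum_single_index (by simp only [mul_zero]; exact Finsupp.single_zero _)]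
  simp; rfl

lemma lf_tensF_single_right {β : Type} {U V : GVS} (φ : (U.tens V).B → (β →₀ K))
    (x : U.B →₀ K) (v : V.B) :
    lf K φ (tensF K x (Finsupp.single v (1 : K))) = x.sum fun b c => c • φ (b, v) := by
  rw [tensF_single_right]; erw [lf_sum]
  exact Finsupp.sum_congr fun b _ => lf_single K φ (b, v) _

lemma lf_tensF_single_left {β : Type} {U V : GVS} (φ : (U.tens V).B → (β →₀ K))
    (u : U.B) (y : V.B →₀ K) :
    lf K φ (tensF K (Finsupp.single u (1 : K)) y) = y.sum fun b c => c • φ (u, b) := by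
  rw [tensF_single_left]; erw [lf_sum]
  exact Finsupp.sum_congr fun b _ => lf_single K φ (u, b) _

lemma smul_sum_single {α β : Type} (k : K) (S : α →₀ K) (h : α → β) :
    (k • S.sum fun b c => Finsupp.single (h b) c) = S.sum fun b c => Finsupp.single (h b) (k * c) := by
  rw [Finsupp.smul_sum]
  exact Finsupp.sum_congr fun b _ => by rw [Finsupp.smul_single, smul_eq_mul]

lemma smul_sum_single' {α β : Type} (k k' : K) (S : α →₀ K) (h : α → β) :
    (k • S.sum fun b c => Finsupp.single (h b) (k' * c))
      = S.sum fun b c => Finsupp.single (h b) ((k * k') * c) := by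
  rw [Finsupp.smul_sum]
  refine Finsupp.sum_congr fun b _ => ?_
  rw [Finsupp.smul_single, smul_eq_mul, mul_assoc]

lemma lf_gamma_tensF_right {U V : GVS} (x : U.B →₀ K) (v : V.B) (d : ℤ)
    (hd : ∀ b ∈ x.support, U.deg b = d) :
    lf K (fun q : (U.tens V).B =>
        ksign K (U.deg q.1 * V.deg q.2) • Finsupp.single ((q.2, q.1) : (V.tens U).B) (1 : K))
      (tensF K x (Finsupp.single v 1))
    = x.sum fun b c => Finsupp.single ((v, b) : (V.tens U).B) (ksign K (d * V.deg v) * c) := by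
  rw [lf_tensF_single_right]
  refine Finsupp.sum_congr fun b hb => ?_
  show x b • (ksign K (U.deg b * V.deg v) • Finsupp.single ((v, b) : (V.tens U).B) (1 : K)) = _
  rw [hd b hb, smul_smul, mul_comm (x b), Finsupp.smul_single, smul_eq_mul, mul_one]

lemma lf_gamma_tensF_left {U V : GVS} (u : U.B) (y : V.B →₀ K) (d : ℤ)
    (hd : ∀ b ∈ y.support, V.deg b = d) :
    lf K (fun q : (U.tens V).B =>
        ksign K (U.deg q.1 * V.deg q.2) • Finsupp.single ((q.2, q.1) : (V.tens U).B) (1 : K))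
      (tensF K (Finsupp.single u 1) y)
    = y.sum fun b c => Finsupp.single ((b, u) : (V.tens U).B) (ksign K (U.deg u * d) * c) := by
  rw [lf_tensF_single_left]
  refine Finsupp.sum_congr fun b hb => ?_
  show y b • (ksign K (U.deg u * V.deg b) • Finsupp.single ((b, u) : (V.tens U).B) (1 : K)) = _
  rw [hd b hb, smul_smul, mul_comm (y b), Finsupp.smul_single, smul_eq_mul, mul_one]

lemma varr_gammaI {g U V : GVS} :
    varr K (gammaI K U V : Pre K g (U.tens V) (V.tens U)) = 0 := by
  funext n ξ p
  simp [varr, gammaI]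

lemma juxt_zero_G {g U V W : GVS} (nG nF : ℤ) (F : Pre K g U V) (n : ℕ)
    (ξ : Fin n → g.B) (u : U.B) :
    juxt K nG nF (0 : Pre K g V W) F n ξ u = 0 := by
  unfold juxt
  refine Finset.sum_eq_zero fun a _ => Finset.sum_eq_zero fun σ _ => ?_
  rw [lf_eq_zero K (φ := (0 : Pre K g V W) (a : ℕ) (firstPart a (ξ ∘ ⇑σ))) (fun _ => rfl),
    smul_zero]

lemma juxt_gammaI {g U V W : GVS} (G : Pre K g (V.tens U) W) (n : ℕ)
    (ξ : Fin n → g.B) (p : (U.tens V).B) :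
    juxt K 1 0 G (gammaI K U V) n ξ p
      = ksign K (U.deg p.1 * V.deg p.2) • G n ξ (p.2, p.1) := by
  unfold juxt
  rw [Fintype.sum_eq_single (⟨n, Nat.lt_succ_self n⟩ : Fin (n + 1))]
  · have hs : shuffles n ((⟨n, Nat.lt_succ_self n⟩ : Fin (n + 1)) : ℕ) = {1} := shuffles_full n
    rw [hs, Finset.sum_singleton]
    have hfp : firstPart (⟨n, Nat.lt_succ_self n⟩ : Fin (n + 1))
        (ξ ∘ ⇑(1 : Equiv.Perm (Fin n))) = ξ := by
      funext t; simp [firstPart]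
    rw [hfp]
    have hγ : gammaI K U V (n - ((⟨n, Nat.lt_succ_self n⟩ : Fin (n + 1)) : ℕ))
        (lastPart (⟨n, Nat.lt_succ_self n⟩ : Fin (n + 1)) (ξ ∘ ⇑(1 : Equiv.Perm (Fin n)))) p
        = ksign K (U.deg p.1 * V.deg p.2) • Finsupp.single (p.2, p.1) 1 := by
      simp only [gammaI]
      rw [if_pos (Nat.sub_self n)]
    rw [hγ]; erw [lf_smul, lf_single]; rw [psign_one, kperm_one]
    simp [ksign_zero]
  · intro a ha
    refine Finset.sum_eq_zero fun σ _ => ?_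
    have h0 : gammaI K U V (n - (a : ℕ)) (lastPart a (ξ ∘ ⇑σ)) p = 0 := by
      simp only [gammaI]
      rw [if_neg (fun h => ha (Fin.ext (show (a : ℕ) = n by have := a.isLt; omega)))]
    rw [h0, lf_zero, smul_zero]

lemma gammaI_juxt {g U V W : GVS} (F : Pre K g W (U.tens V)) (n : ℕ)
    (ξ : Fin n → g.B) (u : W.B) :
    juxt K 0 1 (gammaI K U V) F n ξ u
      = lf K (fun q : (U.tens V).B =>
          ksign K (U.deg q.1 * V.deg q.2) • Finsupp.single ((q.2, q.1) : (V.tens U).B) (1 : K))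
          (F n ξ u) := by
  unfold juxt
  rw [Fintype.sum_eq_single (⟨0, Nat.succ_pos n⟩ : Fin (n + 1))]
  · have hs : shuffles n ((⟨0, Nat.succ_pos n⟩ : Fin (n + 1)) : ℕ) = {1} := shuffles_zero n
    rw [hs, Finset.sum_singleton]
    have hlp : lastPart (⟨0, Nat.succ_pos n⟩ : Fin (n + 1))
        (ξ ∘ ⇑(1 : Equiv.Perm (Fin n))) = ξ := by
      funext t; simp [lastPart]
    rw [hlp]
    have hγ : gammaI K U V ((⟨0, Nat.succ_pos n⟩ : Fin (n + 1)) : ℕ)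
        (firstPart (⟨0, Nat.succ_pos n⟩ : Fin (n + 1)) (ξ ∘ ⇑(1 : Equiv.Perm (Fin n))))
        = fun q : (U.tens V).B =>
            ksign K (U.deg q.1 * V.deg q.2) • Finsupp.single ((q.2, q.1) : (V.tens U).B) (1 : K) := by
      funext q
      simp only [gammaI]
      simp; exact Finsupp.smul_single_one _ _
    rw [hγ, dsum_eq_zero rfl (firstPart (⟨0, Nat.succ_pos n⟩ : Fin (n + 1))
      (ξ ∘ ⇑(1 : Equiv.Perm (Fin n)))), psign_one, kperm_one]
    simp [ksign_zero]; rfl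
  · intro a ha
    refine Finset.sum_eq_zero fun σ _ => ?_
    rw [lf_eq_zero, smul_zero]
    intro q
    simp only [gammaI]
    rw [if_neg (fun h => ha (Fin.ext (show (a : ℕ) = 0 from h)))]

lemma odot_oneI_right {g U V : GVS} (F : Pre K g U U) (n : ℕ)
    (ξ : Fin n → g.B) (p : (U.tens V).B) :
    odot K 1 0 F (oneI K V) n ξ p = tensF K (F n ξ p.1) (Finsupp.single p.2 (1 : K)) := by
  unfold odot
  rw [Fintype.sum_eq_single (⟨n, Nat.lt_succ_self n⟩ : Fin (n + 1))]
  · have hs : shuffles n ((⟨n, Nat.lt_succ_self n⟩ : Fin (n + 1)) : ℕ) = {1} := shuffles_full n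
    rw [hs, Finset.sum_singleton]
    have hfp : firstPart (⟨n, Nat.lt_succ_self n⟩ : Fin (n + 1))
        (ξ ∘ ⇑(1 : Equiv.Perm (Fin n))) = ξ := by
      funext t; simp [firstPart]
    rw [hfp]
    have h1 : oneI K V (n - ((⟨n, Nat.lt_succ_self n⟩ : Fin (n + 1)) : ℕ))
        (lastPart (⟨n, Nat.lt_succ_self n⟩ : Fin (n + 1)) (ξ ∘ ⇑(1 : Equiv.Perm (Fin n)))) p.2
        = Finsupp.single p.2 1 := by
      simp only [oneI]
      rw [if_pos (Nat.sub_self n)]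
    rw [h1, dsum_eq_zero (Nat.sub_self n) (lastPart (⟨n, Nat.lt_succ_self n⟩ : Fin (n + 1))
      (ξ ∘ ⇑(1 : Equiv.Perm (Fin n)))), psign_one, kperm_one]
    simp [ksign_zero]
  · intro a ha
    refine Finset.sum_eq_zero fun σ _ => ?_
    have h1 : oneI K V (n - (a : ℕ)) (lastPart a (ξ ∘ ⇑σ)) p.2 = 0 := by
      simp only [oneI]
      rw [if_neg (fun h => ha (Fin.ext (show (a : ℕ) = n by have := a.isLt; omega)))]
    rw [h1, tensF_zero_right, smul_zero]

lemma oneI_odot_left {g U V : GVS} (G : Pre K g V V) (n : ℕ)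
    (ξ : Fin n → g.B) (p : (U.tens V).B) :
    odot K 0 1 (oneI K U) G n ξ p
      = ksign K (U.deg p.1 * dsum g ξ + (1 - (n : ℤ)) * U.deg p.1) •
          tensF K (Finsupp.single p.1 (1 : K)) (G n ξ p.2) := by
  unfold odot
  rw [Fintype.sum_eq_single (⟨0, Nat.succ_pos n⟩ : Fin (n + 1))]
  · have hs : shuffles n ((⟨0, Nat.succ_pos n⟩ : Fin (n + 1)) : ℕ) = {1} := shuffles_zero n
    rw [hs, Finset.sum_singleton]
    have hlp : lastPart (⟨0, Nat.succ_pos n⟩ : Fin (n + 1))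
        (ξ ∘ ⇑(1 : Equiv.Perm (Fin n))) = ξ := by
      funext t; simp [lastPart]
    rw [hlp]
    have h1 : oneI K U ((⟨0, Nat.succ_pos n⟩ : Fin (n + 1)) : ℕ)
        (firstPart (⟨0, Nat.succ_pos n⟩ : Fin (n + 1)) (ξ ∘ ⇑(1 : Equiv.Perm (Fin n)))) p.1
        = Finsupp.single p.1 1 := by
      simp only [oneI]
      simp
    rw [h1, dsum_eq_zero rfl (firstPart (⟨0, Nat.succ_pos n⟩ : Fin (n + 1))
      (ξ ∘ ⇑(1 : Equiv.Perm (Fin n)))), psign_one, kperm_one]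
    rw [ksign_add]
    simp [ksign_zero]
  · intro a ha
    refine Finset.sum_eq_zero fun σ _ => ?_
    have h1 : oneI K U ((a : ℕ)) (firstPart a (ξ ∘ ⇑σ)) p.1 = 0 := by
      simp only [oneI]
      rw [if_neg (fun h => ha (Fin.ext (show (a : ℕ) = 0 from h)))]
    rw [h1, tensF_zero_left, smul_zero]

end GammaEquivariantAux



/-- the braiding is equivariant: for representations `(U,ρ_U)`,
`(V,ρ_V)`, the braiding intertwiner `γ_{U,V}` satisfies `[ρ, γ_{U,V}] = 0`. -/
theorem gamma_equivariant [CharZero K] {g U V : GVS} (L : LFam K g)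
    (hg : IsHLA K g L)
    (ρU : Pre K g U U) (ρV : Pre K g V V)
    (hU : IsRep K g L U ρU) (hV : IsRep K g L V ρV) :
    brkt K L (rhoT K ρU ρV) (rhoT K ρV ρU) 0 (gammaI K U V) = 0 := by
  funext n ξ p
  simp only [brkt, Pi.sub_apply, Pi.smul_apply, ksign_zero, one_smul, Pi.zero_apply]
  rw [varr_gammaI, juxt_zero_G, sub_zero, juxt_gammaI, gammaI_juxt]; refine sub_eq_zero.mpr ?_
  simp only [rhoT, Pi.add_apply]; erw [Pi.add_apply]
  erw [odot_oneI_right, oneI_odot_left, odot_oneI_right, oneI_odot_left]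
  dsimp only
  rw [lf_add, lf_smul,
    lf_gamma_tensF_right K (ρU n ξ p.1) p.2 (dsum g ξ + U.deg p.1 + 1 - (n : ℤ))
      (fun b hb => hU.1.1 n ξ p.1 b hb),
    lf_gamma_tensF_left K p.1 (ρV n ξ p.2) (dsum g ξ + V.deg p.2 + 1 - (n : ℤ))
      (fun b hb => hV.1.1 n ξ p.2 b hb),
    smul_sum_single', smul_add, tensF_single_right]; erw [smul_sum_single]
  rw [smul_smul, ← ksign_add, tensF_single_left]; erw [smul_sum_single]
  have e1 : ksign K (U.deg p.1 * V.deg p.2 + (V.deg p.2 * dsum g ξ + (1 - (n : ℤ)) * V.deg p.2))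
      = ksign K ((dsum g ξ + U.deg p.1 + 1 - (n : ℤ)) * V.deg p.2) :=
    congrArg _ (by ring)
  have e2 : ksign K (U.deg p.1 * dsum g ξ + (1 - (n : ℤ)) * U.deg p.1) *
        ksign K (U.deg p.1 * (dsum g ξ + V.deg p.2 + 1 - (n : ℤ)))
      = ksign K (U.deg p.1 * V.deg p.2) := by
    rw [← ksign_add]
    exact ksign_congr K ⟨U.deg p.1 * dsum g ξ + (1 - (n : ℤ)) * U.deg p.1, by ring⟩
  rw [e1, e2]
  exact add_comm _ _


end LMI
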